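/- Let T be an 𝔏-theory, (ρₙ)ₙ a sequence of 𝔏-sentences, and define T₀ = (T ∪ {ρₙ : n ∈ ℕ})^⊢ and Tₙ = (T ∪ {ρ₁,…,ρₙ₋₁, ¬ρₙ})^⊢ for n ∈ ℕ, T_{>0} = ⋂_{n≥1} Tₙ. Then an 𝔏-structure M is a model of T_{>0} ∪ T₀ if and only if M ⊨ T_{>m} for every m ≥ 0 (where T_{>m} = ⋂_{n>m} Tₙ), i.e. M ⊨ T_{≫0} := ⋃_{m} ⋂_{n≥m} Tₙ. -/
import Mathlib


open FirstOrder Set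

universe u v w u₁ v₁ u₂ v₂

namespace PaperStmt

/-- An `𝔏`-fragment: a set of `𝔏`-sentences containing `⊤` and `⊥` and
closed under `∧` and `∨`. -/
def IsFragment {L : FirstOrder.Language.{u, v}} (F : Set L.Sentence) : Prop :=
  (⊤ : L.Sentence) ∈ F ∧ (⊥ : L.Sentence) ∈ F ∧
    ∀ φ ψ : L.Sentence, φ ∈ F → ψ ∈ F → (φ ⊓ ψ) ∈ F ∧ (φ ⊔ ψ) ∈ F

/-- `T_F = T^⊢ ∩ F`: the consequences of the theory `T` that lie in the fragment `F`. -/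
def cons {L : FirstOrder.Language.{u, v}} (T : L.Theory) (F : Set L.Sentence) :
    Set L.Sentence :=
  {φ | φ ∈ F ∧ T ⊨ᵇ φ}

/-- Bundled models of `T` (in the universe matching semantic consequence `⊨ᵇ`). -/
abbrev Mod {L : FirstOrder.Language.{u, v}} (T : L.Theory) : Type (max u v + 1) :=
  FirstOrder.Language.Theory.ModelType.{u, v, max u v} T

/-- `Th_F(M)`: the sentences in the fragment `F` true in the model `M`. -/
def th {L : FirstOrder.Language.{u, v}} {T : L.Theory} (F : Set L.Sentence) (M : Mod T) :
    Set L.Sentence :=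
  {φ | φ ∈ F ∧ M ⊨ φ}

/-- The deductive closure of a theory `T`, i.e. the set of all its consequences. -/
def deductiveClosure {L : FirstOrder.Language.{u, v}} (T : L.Theory) : L.Theory :=
  {φ | T ⊨ᵇ φ}

/-- with `T₀ = (T ∪ {ρₙ : n ≥ 1})^⊢`, `Tₙ = (T ∪ {ρ₁,…,ρₙ₋₁,¬ρₙ})^⊢`
and `T_{>m} = ⋂_{n>m} Tₙ`, a structure `M` models `T_{>0} ∪ T₀` if and only if it models
`T_{>m}` for every `m ≥ 0` (i.e. `M ⊨ T_{≫0}`). -/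
theorem statement_11 {L : FirstOrder.Language.{u, v}} (T : L.Theory) (ρ : ℕ → L.Sentence)
    (M : Type w) [L.Structure M] [Nonempty M] :
    (M ⊨ ((⋂ n ∈ {n : ℕ | 1 ≤ n},
          deductiveClosure (T ∪ (ρ '' {k | 1 ≤ k ∧ k < n}) ∪ {∼(ρ n)})) ∪
        deductiveClosure (T ∪ ρ '' {k | 1 ≤ k}) : L.Theory)) ↔
      ∀ m : ℕ, M ⊨ (⋂ n ∈ {n : ℕ | m < n},
          deductiveClosure (T ∪ (ρ '' {k | 1 ≤ k ∧ k < n}) ∪ {∼(ρ n)}) : L.Theory) := by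
  set D : ℕ → L.Theory :=
    fun n => deductiveClosure (T ∪ (ρ '' {k | 1 ≤ k ∧ k < n}) ∪ {∼(ρ n)}) with hD
  constructor
  · rintro hM
    haveI hMint : M ⊨ (⋂ n ∈ {n : ℕ | 1 ≤ n}, D n) := hM.mono Set.subset_union_left
    haveI hM0 : M ⊨ deductiveClosure (T ∪ ρ '' {k | 1 ≤ k}) := hM.mono Set.subset_union_right
    have hρ : ∀ k : ℕ, 1 ≤ k → M ⊨ ρ k := by
      intro k hk
      exact Language.Theory.realize_sentence_of_mem (deductiveClosure (T ∪ ρ '' {k | 1 ≤ k}))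
        (Language.Theory.models_sentence_of_mem (Or.inr ⟨k, hk, rfl⟩))
    intro m
    induction m with
    | zero =>
      refine (Language.Theory.model_iff _).2 fun φ hφ => ?_
      refine Language.Theory.realize_sentence_of_mem (⋂ n ∈ {n : ℕ | 1 ≤ n}, D n) ?_
      simp only [Set.mem_iInter, Set.mem_setOf_eq] at hφ ⊢
      exact fun n hn => hφ n hn
    | succ m ih =>
      refine (Language.Theory.model_iff _).2 fun φ hφ => ?_
      simp only [Set.mem_iInter, Set.mem_setOf_eq] at hφ
      have hmem : (ρ (m + 1) ⟹ φ) ∈ (⋂ n ∈ {n : ℕ | m < n}, D n) := by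
        simp only [Set.mem_iInter, Set.mem_setOf_eq]
        intro n hn
        rcases eq_or_lt_of_le (Nat.succ_le_of_lt hn) with heq | hlt
        · subst heq
          refine Language.Theory.models_sentence_iff.2 fun N => ?_
          have hnot : N ⊨ (∼(ρ (m + 1)) : L.Sentence) :=
            Language.Theory.realize_sentence_of_mem (T ∪ ρ '' {k | 1 ≤ k ∧ k < (m+1)} ∪ {∼(ρ (m+1))}) (Or.inr rfl)
          rw [Language.Sentence.realize_not] at hnot
          simp only [Language.Sentence.Realize, Language.Formula.realize_imp]
          intro hcontr
          exact absurd hcontr hnot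
        · have hφn : (T ∪ ρ '' {k | 1 ≤ k ∧ k < n} ∪ {∼(ρ n)}) ⊨ᵇ φ := hφ n hlt
          refine Language.Theory.models_sentence_iff.2 fun N => ?_
          simp only [Language.Sentence.Realize, Language.Formula.realize_imp]
          intro _
          exact hφn.realize_sentence N
      have himp : M ⊨ (ρ (m + 1) ⟹ φ) := by
        haveI : M ⊨ (⋂ n ∈ {n : ℕ | m < n}, D n) := ih
        exact Language.Theory.realize_sentence_of_mem (⋂ n ∈ {n : ℕ | m < n}, D n) hmem
      simp only [Language.Sentence.Realize, Language.Formula.realize_imp] at himp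
      exact himp (hρ (m + 1) (Nat.succ_le_succ (Nat.zero_le m)))
  · intro h
    have hT : ∀ φ ∈ T, M ⊨ φ := by
      intro φ hφ
      haveI : M ⊨ (⋂ n ∈ {n : ℕ | 0 < n}, D n) := h 0
      refine Language.Theory.realize_sentence_of_mem (⋂ n ∈ {n : ℕ | 0 < n}, D n) ?_
      simp only [Set.mem_iInter, Set.mem_setOf_eq]
      intro n hn
      exact Language.Theory.models_sentence_of_mem (Or.inl (Or.inl hφ))
    have hρ : ∀ n : ℕ, 1 ≤ n → M ⊨ ρ n := by
      intro n hn
      haveI : M ⊨ (⋂ k ∈ {k : ℕ | n < k}, D k) := h n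
      refine Language.Theory.realize_sentence_of_mem (⋂ k ∈ {k : ℕ | n < k}, D k) ?_
      simp only [Set.mem_iInter, Set.mem_setOf_eq]
      intro k hk
      exact Language.Theory.models_sentence_of_mem (Or.inl (Or.inr ⟨n, ⟨hn, hk⟩, rfl⟩))
    haveI hMod : M ⊨ (T ∪ ρ '' {k | 1 ≤ k} : L.Theory) := by
      rw [Language.Theory.model_iff]
      rintro φ (hφ | ⟨k, hk, rfl⟩)
      · exact hT φ hφ
      · exact hρ k hk
    rw [Language.Theory.model_iff]
    rintro φ (hφ | hφ)
    · simp only [Set.mem_iInter, Set.mem_setOf_eq] at hφ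
      haveI : M ⊨ (⋂ n ∈ {n : ℕ | 0 < n}, D n) := h 0
      refine Language.Theory.realize_sentence_of_mem (⋂ n ∈ {n : ℕ | 0 < n}, D n) ?_
      simp only [Set.mem_iInter, Set.mem_setOf_eq]
      exact fun n hn => hφ n hn
    · exact hφ.realize_sentence M

end PaperStmt
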